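/- arXiv:1305.1256 — 4 statements merged into one kernel-verified Lean document; each statement's English description precedes it below -/
import Mathlib

section
/- Let H be a real inner product space, α ≥ 0, and w ∈ H. Define T_α(w) = (max(‖w‖ − α, 0)/‖w‖)·w for w ≠ 0 and T_α(0) = 0. Then T_α(w) is the unique global minimizer of the function u ↦ α‖u‖ + ½‖u − w‖² on H. -/
open Classical

/-- In a real inner product space, the shrinkage operator
`T_α(w) = (max (‖w‖ − α, 0)/‖w‖)·w` (with `T_α(0) = 0`) is the unique global minimizer
of `u ↦ α‖u‖ + ½‖u − w‖²`, i.e. the proximal operator of `α‖·‖`. -/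
theorem shrinkage_is_unique_minimizer
    {H : Type*} [NormedAddCommGroup H] [InnerProductSpace ℝ H]
    (α : ℝ) (hα : 0 ≤ α) (w : H)
    (T : H) (hT : T = if w = 0 then 0 else (max (‖w‖ - α) 0 / ‖w‖) • w) :
    (∀ u : H, α * ‖T‖ + (1 / 2) * ‖T - w‖ ^ 2 ≤ α * ‖u‖ + (1 / 2) * ‖u - w‖ ^ 2) ∧
    (∀ u : H,
        (∀ v : H, α * ‖u‖ + (1 / 2) * ‖u - w‖ ^ 2 ≤ α * ‖v‖ + (1 / 2) * ‖v - w‖ ^ 2) →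
        u = T) := by
  -- subgradient inequality: α‖T‖ + ⟪u − T, w − T⟫ ≤ α‖u‖
  have key : ∀ u : H, α * ‖T‖ + (inner ℝ (u - T) (w - T) : ℝ) ≤ α * ‖u‖ := by
    intro u
    by_cases hw : w = 0
    · have : T = 0 := by simp [hT, hw]
      subst hw; rw [this]; simp; positivity
    · have hT' : T = (max (‖w‖ - α) 0 / ‖w‖) • w := by simp [hT, hw]
      have hwn : (0:ℝ) < ‖w‖ := norm_pos_iff.mpr hw
      have hiu : (inner ℝ u w : ℝ) ≤ ‖u‖ * ‖w‖ := real_inner_le_norm u w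
      by_cases hle : ‖w‖ ≤ α
      · have hc : max (‖w‖ - α) 0 = 0 := max_eq_right (by linarith)
        have hT0 : T = 0 := by rw [hT', hc]; simp
        rw [hT0]
        simp only [sub_zero, norm_zero, mul_zero, zero_add]
        calc (inner ℝ u w : ℝ) ≤ ‖u‖ * ‖w‖ := hiu
          _ ≤ α * ‖u‖ := by nlinarith [norm_nonneg u]
      · push_neg at hle
        set c : ℝ := (‖w‖ - α) / ‖w‖ with hcdef
        have hc : max (‖w‖ - α) 0 = ‖w‖ - α := max_eq_left (by linarith)
        have hTc : T = c • w := by rw [hT', hc]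
        have hc0 : 0 ≤ c := div_nonneg (by linarith) hwn.le
        have hnT : ‖T‖ = c * ‖w‖ := by
          rw [hTc, norm_smul, Real.norm_eq_abs, abs_of_nonneg hc0]
        have hwT : w - T = ((1 : ℝ) - c) • w := by
          rw [hTc, sub_smul, one_smul]
        have hinner : (inner ℝ (u - T) (w - T) : ℝ)
            = (1 - c) * ((inner ℝ u w : ℝ) - c * ‖w‖ ^ 2) := by
          rw [hwT, hTc, real_inner_smul_right, inner_sub_left,
            real_inner_smul_left, real_inner_self_eq_norm_sq]
        rw [hnT, hinner]
        have h1c : 1 - c = α / ‖w‖ := by rw [hcdef]; field_simp; ring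
        have hcw : c * ‖w‖ = ‖w‖ - α := by rw [hcdef]; field_simp
        rw [h1c]
        have hαw : 0 ≤ α / ‖w‖ := div_nonneg hα hwn.le
        have h2 : α / ‖w‖ * ((inner ℝ u w : ℝ) - c * ‖w‖ ^ 2)
            ≤ α / ‖w‖ * (‖u‖ * ‖w‖ - c * ‖w‖ ^ 2) := by
          apply mul_le_mul_of_nonneg_left _ hαw
          linarith
        have h3 : α / ‖w‖ * (‖u‖ * ‖w‖ - c * ‖w‖ ^ 2) = α * ‖u‖ - α * (c * ‖w‖) := by
          field_simp
        linarith
  -- strong convexity inequality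
  have strong : ∀ u : H,
      α * ‖T‖ + (1 / 2) * ‖T - w‖ ^ 2 + (1 / 2) * ‖u - T‖ ^ 2
        ≤ α * ‖u‖ + (1 / 2) * ‖u - w‖ ^ 2 := by
    intro u
    have hexp : ‖u - w‖ ^ 2 = ‖u - T‖ ^ 2 + 2 * (inner ℝ (u - T) (T - w) : ℝ)
        + ‖T - w‖ ^ 2 := by
      have : u - w = (u - T) + (T - w) := by abel
      rw [this, norm_add_sq_real]
    have hneg : (inner ℝ (u - T) (T - w) : ℝ) = -(inner ℝ (u - T) (w - T) : ℝ) := by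
      rw [← inner_neg_right]; congr 1; abel
    have := key u
    rw [hexp, hneg]
    linarith
  constructor
  · intro u
    have := strong u
    nlinarith [sq_nonneg ‖u - T‖]
  · intro u hu
    have h1 := strong u
    have h2 := hu T
    have : ‖u - T‖ ^ 2 ≤ 0 := by linarith
    have : ‖u - T‖ = 0 := by nlinarith [norm_nonneg (u - T)]
    have := norm_eq_zero.mp this
    exact sub_eq_zero.mp this
end

section
/- Let n be a natural number, f : ℝⁿ → ℝ a convex differentiable function, β ≥ 0, γ > 0, and let F(w) = f(w) + β·∑ᵢ|wᵢ|. Then w⋆ ∈ ℝⁿ is a global minimizer of F if and only if w⋆ is a fixed point of the ISTA step, i.e. w⋆ = S_{βγ}(w⋆ − γ∇f(w⋆)), where S_{βγ} is applied coordinatewise. -/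
/-- per-coordinate optimality condition -/
def Kcond (β x g : ℝ) : Prop :=
  (0 < x → g = -β) ∧ (x < 0 → g = β) ∧ (x = 0 → |g| ≤ β)

lemma fp_of_K {β γ x g : ℝ} (hβ : 0 ≤ β) (hγ : 0 < γ) (hK : Kcond β x g) :
    x = Real.sign (x - γ * g) * max (|x - γ * g| - β * γ) 0 := by
  obtain ⟨h1, h2, h3⟩ := hK
  rcases lt_trichotomy x 0 with hx | hx | hx
  · have hg := h2 hx
    have hu : x - γ * g < 0 := by nlinarith
    rw [Real.sign_of_neg hu, abs_of_neg hu, hg]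
    rw [max_eq_left (by nlinarith)]
    ring
  · subst hx
    have hg := h3 rfl
    have : |0 - γ * g| ≤ β * γ := by
      rw [zero_sub, abs_neg, abs_mul, abs_of_pos hγ]
      nlinarith [abs_nonneg g]
    rw [max_eq_right (by linarith)]
    ring
  · have hg := h1 hx
    have hu : 0 < x - γ * g := by nlinarith
    rw [Real.sign_of_pos hu, abs_of_pos hu, hg]
    rw [max_eq_left (by nlinarith)]
    ring

lemma K_of_fp {β γ x g : ℝ} (hβ : 0 ≤ β) (hγ : 0 < γ)
    (h : x = Real.sign (x - γ * g) * max (|x - γ * g| - β * γ) 0) :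
    Kcond β x g := by
  generalize hu : x - γ * g = u at h
  refine ⟨?_, ?_, ?_⟩
  · intro hx
    have hupos : 0 < u := by
      by_contra hc
      push_neg at hc
      rcases eq_or_lt_of_le hc with hc | hc
      · rw [hc, Real.sign_zero, zero_mul] at h; linarith
      · rw [Real.sign_of_neg hc] at h
        nlinarith [le_max_right (|u| - β * γ) 0, h]
    rw [Real.sign_of_pos hupos, abs_of_pos hupos, one_mul] at h
    have : x = u - β * γ := by
      rcases max_cases (u - β * γ) 0 with ⟨he, _⟩ | ⟨he, _⟩
      · rw [he] at h; linarith
      · rw [he] at h; linarith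
    have : γ * g = -(β * γ) := by rw [← hu] at this; linarith
    field_simp at this ⊢
    nlinarith [this]
  · intro hx
    have huneg : u < 0 := by
      by_contra hc
      push_neg at hc
      rcases eq_or_lt_of_le hc with hc | hc
      · rw [← hc, Real.sign_zero, zero_mul] at h; linarith
      · rw [Real.sign_of_pos hc] at h
        nlinarith [le_max_right (|u| - β * γ) 0, h]
    rw [Real.sign_of_neg huneg, abs_of_neg huneg] at h
    have : x = u + β * γ := by
      rcases max_cases (-u - β * γ) 0 with ⟨he, _⟩ | ⟨he, _⟩
      · rw [he] at h; linarith
      · rw [he] at h; linarith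
    have hg : γ * g = β * γ := by rw [← hu] at this; linarith
    nlinarith [hg]
  · intro hx
    subst hx
    have hu0 : u = -(γ * g) := by rw [← hu]; ring
    rcases eq_or_ne u 0 with h0 | h0
    · have : g = 0 := by
        have := h0
        rw [hu0, neg_eq_zero] at this
        exact (mul_eq_zero.1 this).resolve_left (ne_of_gt hγ)
      rw [this, abs_zero]; exact hβ
    · have hsne : Real.sign u ≠ 0 := fun hc => h0 (Real.sign_eq_zero_iff.1 hc)
      have hmax : max (|u| - β * γ) 0 = 0 := by
        by_contra hc
        exact hsne (by
          rcases mul_eq_zero.1 h.symm with h' | h'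
          · exact h'
          · exact absurd h' hc)
      have : |u| ≤ β * γ := by
        rcases max_cases (|u| - β * γ) 0 with ⟨he, _⟩ | ⟨_, he⟩
        · rw [he] at hmax; linarith
        · linarith
      rw [hu0, abs_neg, abs_mul, abs_of_pos hγ] at this
      nlinarith [abs_nonneg g]

lemma subgrad_of_K {β x g : ℝ} (hβ : 0 ≤ β) (hK : Kcond β x g) (t : ℝ) :
    β * |x| ≤ β * |t| + g * (t - x) := by
  obtain ⟨h1, h2, h3⟩ := hK
  rcases lt_trichotomy x 0 with hx | hx | hx
  · rw [h2 hx, abs_of_neg hx]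
    nlinarith [neg_abs_le t]
  · subst hx
    rw [abs_zero]
    nlinarith [neg_abs_le g, le_abs_self g, neg_abs_le t, le_abs_self t, h3 rfl,
      abs_nonneg t, mul_le_mul_of_nonneg_right (h3 rfl) (abs_nonneg t),
      abs_mul g t, neg_abs_le (g * t)]
  · rw [h1 hx, abs_of_pos hx]
    nlinarith [le_abs_self t]

lemma K_of_subgrad {β x g : ℝ} (_hβ : 0 ≤ β)
    (h : ∀ t, β * |x| ≤ β * |t| + g * (t - x)) : Kcond β x g := by
  refine ⟨?_, ?_, ?_⟩
  · intro hx
    have h0 := h 0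
    have h2 := h (2 * x)
    rw [abs_of_pos hx, abs_zero] at h0
    rw [abs_of_pos hx, abs_of_pos (by linarith : (0:ℝ) < 2 * x)] at h2
    nlinarith
  · intro hx
    have h0 := h 0
    have h2 := h (2 * x)
    rw [abs_of_neg hx, abs_zero] at h0
    rw [abs_of_neg hx, abs_of_neg (by linarith : 2 * x < 0)] at h2
    nlinarith
  · intro hx
    subst hx
    have h1 := h 1
    have h2 := h (-1)
    simp at h1 h2
    rw [abs_le]
    constructor <;> linarith


open InnerProductSpace

lemma line_hasDerivAt {E : Type*} [NormedAddCommGroup E] [NormedSpace ℝ E]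
    (f : E → ℝ) (hdiff : Differentiable ℝ f) (x v : E) :
    HasDerivAt (fun t : ℝ => f (x + t • v)) (fderiv ℝ f x v) 0 := by
  have h1 : HasDerivAt (fun t : ℝ => x + t • v) v 0 := by
    simpa using ((hasDerivAt_id (0 : ℝ)).smul_const v).const_add x
  have h2 := (hdiff (x + (0 : ℝ) • v)).hasFDerivAt.comp_hasDerivAt 0 h1
  simp only [zero_smul, add_zero] at h2
  exact h2

lemma inner_grad {n : ℕ} (f : EuclideanSpace ℝ (Fin n) → ℝ) (hdiff : Differentiable ℝ f)
    (x v : EuclideanSpace ℝ (Fin n)) :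
    fderiv ℝ f x v = ⟪gradient f x, v⟫_ℝ := by
  have h := (hdiff x).hasGradientAt
  rw [hasGradientAt_iff_hasFDerivAt] at h
  rw [h.fderiv]
  exact (InnerProductSpace.toDual_apply_apply (𝕜 := ℝ) (E := EuclideanSpace ℝ (Fin n))).symm

lemma grad_ineq {n : ℕ} (f : EuclideanSpace ℝ (Fin n) → ℝ)
    (hconv : ConvexOn ℝ Set.univ f) (hdiff : Differentiable ℝ f)
    (x y : EuclideanSpace ℝ (Fin n)) :
    f x + ⟪gradient f x, y - x⟫_ℝ ≤ f y := by
  set φ : ℝ → ℝ := fun t => f (x + t • (y - x)) with hφ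
  have hconvφ : ConvexOn ℝ Set.univ φ := by
    refine ⟨convex_univ, ?_⟩
    intro a _ b _ p q hp hq hpq
    have h := hconv.2 (Set.mem_univ (x + a • (y - x))) (Set.mem_univ (x + b • (y - x)))
      hp hq hpq
    obtain rfl : q = 1 - p := by linarith
    simp only [hφ, smul_eq_mul]
    have harg : x + (p * a + (1 - p) * b) • (y - x)
        = p • (x + a • (y - x)) + (1 - p) • (x + b • (y - x)) := by module
    rw [harg]
    simpa [smul_eq_mul] using h
  have hder : HasDerivAt φ (fderiv ℝ f x (y - x)) 0 := line_hasDerivAt f hdiff x (y - x)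
  have hsl := hconvφ.le_slope_of_hasDerivAt (Set.mem_univ (0 : ℝ)) (Set.mem_univ 1)
    one_pos hder
  rw [slope_def_field] at hsl
  have h0 : φ 0 = f x := by simp [hφ]
  have h1 : φ 1 = f y := by simp [hφ]
  rw [h0, h1] at hsl
  rw [← inner_grad f hdiff x (y - x)]
  have : (1 : ℝ) - 0 = 1 := by norm_num
  rw [this, div_one] at hsl
  linarith

/-- For `F = f + β‖·‖₁` with `f` convex and differentiable, `w⋆` is a global minimizer
of `F` iff it is a fixed point of the ISTA step `w ↦ S_{βγ}(w − γ∇f(w))`, where the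
soft-thresholding `S_{βγ}(t) = sign(t)·max(|t| − βγ, 0)` is applied coordinatewise. -/
theorem ista_fixed_point_iff_minimizer
    (n : ℕ) (f : EuclideanSpace ℝ (Fin n) → ℝ)
    (hconv : ConvexOn ℝ Set.univ f) (hdiff : Differentiable ℝ f)
    (β γ : ℝ) (hβ : 0 ≤ β) (hγ : 0 < γ)
    (S : EuclideanSpace ℝ (Fin n) → EuclideanSpace ℝ (Fin n))
    (hS : ∀ (u : EuclideanSpace ℝ (Fin n)) (i : Fin n),
        S u i = Real.sign (u i) * max (|u i| - β * γ) 0)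
    (wstar : EuclideanSpace ℝ (Fin n)) :
    (∀ w : EuclideanSpace ℝ (Fin n),
        f wstar + β * ∑ i, |wstar i| ≤ f w + β * ∑ i, |w i|)
      ↔ wstar = S (wstar - γ • gradient f wstar) := by
  set g := gradient f wstar with hg
  have hu : ∀ i, (wstar - γ • g) i = wstar i - γ * g i := by
    intro i
    simp [PiLp.sub_apply, PiLp.smul_apply, smul_eq_mul]
  constructor
  · intro hmin
    have hdir : ∀ (i : Fin n) (s : ℝ), β * |wstar i| ≤ β * |wstar i + s| + g i * s := by
      intro i s
      have hsum : ∀ c : ℝ, ∑ j, |(wstar + EuclideanSpace.single i c) j|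
          = ∑ j, |wstar j| + (|wstar i + c| - |wstar i|) := by
        intro c
        rw [← Finset.add_sum_erase Finset.univ
            (fun j => |(wstar + EuclideanSpace.single i c) j|) (Finset.mem_univ i),
          ← Finset.add_sum_erase Finset.univ (fun j => |wstar j|) (Finset.mem_univ i)]
        have he : ∑ j ∈ Finset.univ.erase i, |(wstar + EuclideanSpace.single i c) j|
            = ∑ j ∈ Finset.univ.erase i, |wstar j| := by
          refine Finset.sum_congr rfl fun j hj => ?_
          have hj' := Finset.ne_of_mem_erase hj
          simp [PiLp.add_apply, EuclideanSpace.single_apply, hj']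
        have hi : (wstar + EuclideanSpace.single i c) i = wstar i + c := by
          simp [PiLp.add_apply, EuclideanSpace.single_apply]
        rw [he, hi]
        ring
      have hminc : ∀ c : ℝ, β * |wstar i| - β * |wstar i + c| ≤
          f (wstar + EuclideanSpace.single i c) - f wstar := by
        intro c
        have h := hmin (wstar + EuclideanSpace.single i c)
        rw [hsum c, mul_add, mul_sub] at h
        linarith
      set v : EuclideanSpace ℝ (Fin n) := EuclideanSpace.single i s with hv
      have hder : HasDerivAt (fun t : ℝ => f (wstar + t • v)) (fderiv ℝ f wstar v) 0 :=
        line_hasDerivAt f hdiff wstar v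
      have hfv : fderiv ℝ f wstar v = g i * s := by
        rw [inner_grad f hdiff wstar v, hv, ← hg]
        simp [PiLp.inner_apply, RCLike.inner_apply, EuclideanSpace.single_apply, mul_comm]
      have htend := hasDerivAt_iff_tendsto_slope.1 hder
      have htend' : Filter.Tendsto (slope (fun t : ℝ => f (wstar + t • v)) 0)
          (nhdsWithin 0 (Set.Ioi 0)) (nhds (fderiv ℝ f wstar v)) :=
        htend.mono_left (nhdsWithin_mono 0
          (fun t ht => Set.mem_compl_singleton_iff.mpr (ne_of_gt ht)))
      have hbound : ∀ᶠ t in nhdsWithin (0 : ℝ) (Set.Ioi 0),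
          β * |wstar i| - β * |wstar i + s| ≤
            slope (fun t : ℝ => f (wstar + t • v)) 0 t := by
        filter_upwards [Ioo_mem_nhdsGT_of_mem (Set.left_mem_Ico.2 one_pos)] with t ht
        obtain ⟨ht0, ht1⟩ := ht
        have harg : wstar + t • v = wstar + EuclideanSpace.single i (t * s) := by
          congr 1
          ext j
          simp [hv, PiLp.smul_apply, EuclideanSpace.single_apply, smul_eq_mul, mul_ite]
        have h1 := hminc (t * s)
        have habs : |wstar i + t * s| ≤ (1 - t) * |wstar i| + t * |wstar i + s| := by
          have he : wstar i + t * s = (1 - t) * wstar i + t * (wstar i + s) := by ring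
          rw [he]
          calc |(1 - t) * wstar i + t * (wstar i + s)|
              ≤ |(1 - t) * wstar i| + |t * (wstar i + s)| := abs_add_le _ _
            _ = (1 - t) * |wstar i| + t * |wstar i + s| := by
                rw [abs_mul, abs_mul, abs_of_nonneg (by linarith), abs_of_nonneg ht0.le]
        rw [slope_def_field]
        have e0 : wstar + (0 : ℝ) • v = wstar := by simp
        rw [e0, harg, sub_zero, le_div_iff₀ ht0]
        have hmul := mul_le_mul_of_nonneg_left habs hβ
        nlinarith [h1, hmul]
      have hlim := ge_of_tendsto htend' hbound
      rw [hfv] at hlim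
      linarith
    have hK : ∀ i, Kcond β (wstar i) (g i) := by
      intro i
      refine K_of_subgrad hβ fun t => ?_
      have h := hdir i (t - wstar i)
      rw [add_sub_cancel] at h
      linarith
    refine PiLp.ext fun i => ?_
    rw [hS, hu i]
    exact fp_of_K hβ hγ (hK i)
  · intro hfix w
    have hK : ∀ i, Kcond β (wstar i) (g i) := by
      intro i
      refine K_of_fp hβ hγ ?_
      conv_lhs => rw [hfix]
      rw [hS, hu i]
    have hsum := Finset.sum_le_sum
      (fun i (_ : i ∈ Finset.univ) => subgrad_of_K hβ (hK i) (w i))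
    rw [Finset.sum_add_distrib] at hsum
    have hinner : ⟪g, w - wstar⟫_ℝ = ∑ i, g i * (w i - wstar i) := by
      simp [PiLp.inner_apply, RCLike.inner_apply, PiLp.sub_apply]
      exact Finset.sum_congr rfl fun i _ => mul_comm _ _
    have hgi := grad_ineq f hconv hdiff wstar w
    rw [← hg, hinner] at hgi
    simp only [Finset.mul_sum]
    linarith
end

section
/- Let n be a natural number, f : ℝⁿ → ℝ convex and differentiable with L-Lipschitz gradient (L > 0), β ≥ 0, and 0 < γ ≤ 1/L. Set F(w) = f(w) + β·∑ᵢ|wᵢ|. Then for every w ∈ ℝⁿ, the ISTA update w⁺ = S_{βγ}(w − γ∇f(w)) (soft-thresholding applied coordinatewise) satisfies F(w⁺) ≤ F(w). -/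
open RealInnerProductSpace

private lemma ista_descent_lemma {n : ℕ} (f : EuclideanSpace ℝ (Fin n) → ℝ)
    (hdiff : Differentiable ℝ f) (L : ℝ) (hL : 0 ≤ L)
    (hlip : ∀ w₁ w₂ : EuclideanSpace ℝ (Fin n),
        ‖gradient f w₂ - gradient f w₁‖ ≤ L * ‖w₂ - w₁‖)
    (x y : EuclideanSpace ℝ (Fin n)) :
    f y ≤ f x + ⟪gradient f x, y - x⟫ + L / 2 * ‖y - x‖ ^ 2 := by
  set v := y - x with hv
  have hder : ∀ t : ℝ, HasDerivAt (fun t : ℝ => f (x + t • v))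
      ⟪gradient f (x + t • v), v⟫ t := by
    intro t
    have h1 : HasDerivAt (fun t : ℝ => x + t • v) v t := by
      simpa using ((hasDerivAt_id t).smul_const v).const_add x
    have h2 : HasFDerivAt f (InnerProductSpace.toDual ℝ _ (gradient f (x + t • v)))
        (x + t • v) := by
      rw [← hasGradientAt_iff_hasFDerivAt]
      exact (hdiff _).hasGradientAt
    have := h2.comp_hasDerivAt t h1
    simpa [InnerProductSpace.toDual_apply_apply, Function.comp_def] using this
  set c := ⟪gradient f x, v⟫ with hc
  set ψ : ℝ → ℝ := fun t => f (x + t • v) - t * c - L * t ^ 2 / 2 * ‖v‖ ^ 2 with hψ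
  have hψder : ∀ t : ℝ, HasDerivAt ψ
      (⟪gradient f (x + t • v), v⟫ - c - L * t * ‖v‖ ^ 2) t := by
    intro t
    have h1 := (hder t).sub ((hasDerivAt_id t).const_mul c)
    have h2 : HasDerivAt (fun t : ℝ => L * t ^ 2 / 2 * ‖v‖ ^ 2)
        (L * t * ‖v‖ ^ 2) t := by
      have := ((hasDerivAt_pow 2 t).const_mul L).div_const 2
      have := this.mul_const (‖v‖ ^ 2)
      exact this.congr_deriv (by ring)
    have h3 := h1.sub h2
    have heq : ψ = fun s : ℝ => f (x + s • v) - c * id s - L * s ^ 2 / 2 * ‖v‖ ^ 2 := by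
      funext s; simp only [hψ, id]; ring
    rw [heq]
    exact h3.congr_deriv (by ring)
  have hanti : AntitoneOn ψ (Set.Icc (0:ℝ) 1) := by
    apply antitoneOn_of_deriv_nonpos (convex_Icc 0 1)
    · rw [hψ]
      exact Continuous.continuousOn (by
        have : Continuous fun t : ℝ => f (x + t • v) :=
          hdiff.continuous.comp (by continuity)
        exact (this.sub (by fun_prop)).sub (by fun_prop))
    · intro t _
      exact ((hψder t).differentiableAt).differentiableWithinAt
    · intro t ht
      rw [interior_Icc] at ht
      rw [(hψder t).deriv]
      have hcs : ⟪gradient f (x + t • v) - gradient f x, v⟫ ≤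
          ‖gradient f (x + t • v) - gradient f x‖ * ‖v‖ := real_inner_le_norm _ _
      have hl := hlip x (x + t • v)
      have : ‖x + t • v - x‖ = t * ‖v‖ := by
        simp [norm_smul, abs_of_nonneg ht.1.le]
      rw [this] at hl
      have hsub : ⟪gradient f (x + t • v) - gradient f x, v⟫ =
          ⟪gradient f (x + t • v), v⟫ - c := by
        rw [inner_sub_left]
      nlinarith [norm_nonneg v, mul_nonneg (mul_nonneg hL ht.1.le) (norm_nonneg v)]
  have h01 := hanti (Set.left_mem_Icc.mpr zero_le_one) (Set.right_mem_Icc.mpr zero_le_one) zero_le_one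
  simp only [hψ] at h01
  have h0 : x + (0:ℝ) • v = x := by simp
  have h1 : x + (1:ℝ) • v = y := by simp [hv]
  rw [h0, h1] at h01
  simp at h01
  linarith [h01]

private lemma ista_prox_key (a t v : ℝ) (ha : 0 ≤ a) :
    (Real.sign t * max (|t| - a) 0 - t) ^ 2 + 2 * a * |Real.sign t * max (|t| - a) 0|
      ≤ (v - t) ^ 2 + 2 * a * |v| := by
  rcases lt_trichotomy t 0 with ht | ht | ht
  · rw [Real.sign_of_neg ht, abs_of_neg ht]
    rcases le_or_gt (-t) a with h | h
    · rw [max_eq_right (by linarith)]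
      simp only [mul_zero, zero_sub, abs_zero]
      nlinarith [le_abs_self (t*v), abs_mul t v, abs_of_neg ht, abs_nonneg v, sq_nonneg v]
    · rw [max_eq_left (by linarith)]
      have hs : (-1 : ℝ) * (-t - a) = t + a := by ring
      rw [hs, abs_of_neg (by linarith : t + a < 0)]
      nlinarith [neg_abs_le v, sq_nonneg (v - t - a)]
  · subst ht; simp; nlinarith [abs_nonneg v]
  · rw [Real.sign_of_pos ht, abs_of_pos ht]
    rcases le_or_gt t a with h | h
    · rw [max_eq_right (by linarith)]
      simp only [one_mul, mul_zero, zero_sub, abs_zero]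
      nlinarith [le_abs_self (t*v), abs_mul t v, abs_of_pos ht, abs_nonneg v, sq_nonneg v]
    · rw [max_eq_left (by linarith)]
      rw [one_mul, abs_of_pos (by linarith : (0:ℝ) < t - a)]
      nlinarith [le_abs_self v, sq_nonneg (v - t + a)]

/-- Monotone decrease of ISTA: if `f` is convex and differentiable with `L`-Lipschitz
gradient, `β ≥ 0` and `0 < γ ≤ 1/L`, then one ISTA update
`w⁺ = S_{βγ}(w − γ∇f(w))` does not increase `F = f + β‖·‖₁`. -/
theorem ista_step_decreases
    (n : ℕ) (f : EuclideanSpace ℝ (Fin n) → ℝ)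
    (hconv : ConvexOn ℝ Set.univ f) (hdiff : Differentiable ℝ f)
    (L : ℝ) (hL : 0 < L)
    (hlip : ∀ w₁ w₂ : EuclideanSpace ℝ (Fin n),
        ‖gradient f w₂ - gradient f w₁‖ ≤ L * ‖w₂ - w₁‖)
    (β γ : ℝ) (hβ : 0 ≤ β) (hγ : 0 < γ) (hγL : γ ≤ 1 / L)
    (S : EuclideanSpace ℝ (Fin n) → EuclideanSpace ℝ (Fin n))
    (hS : ∀ (u : EuclideanSpace ℝ (Fin n)) (i : Fin n),
        S u i = Real.sign (u i) * max (|u i| - β * γ) 0) :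
    ∀ w : EuclideanSpace ℝ (Fin n),
      f (S (w - γ • gradient f w)) + β * ∑ i, |S (w - γ • gradient f w) i|
        ≤ f w + β * ∑ i, |w i| := by
  intro w
  set g : EuclideanSpace ℝ (Fin n) := gradient f w with hg
  set u : EuclideanSpace ℝ (Fin n) := w - γ • g with hu
  set p : EuclideanSpace ℝ (Fin n) := S u with hp
  have hui : ∀ i, u i = w i - γ * g i := by
    intro i
    simp [hu, PiLp.sub_apply, PiLp.smul_apply, smul_eq_mul]
  have hcoord : ∀ i, (p i - u i) ^ 2 + 2 * (β * γ) * |p i|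
      ≤ (w i - u i) ^ 2 + 2 * (β * γ) * |w i| := by
    intro i
    rw [hp, hS u i]
    exact ista_prox_key (β * γ) (u i) (w i) (mul_nonneg hβ hγ.le)
  set A : ℝ := ∑ i, g i * (p i - w i) with hA
  set B : ℝ := ∑ i, (p i - w i) * (p i - w i) with hB
  set P : ℝ := ∑ i, |p i| with hP
  set W : ℝ := ∑ i, |w i| with hW
  have hBnn : 0 ≤ B := Finset.sum_nonneg fun i _ => mul_self_nonneg _
  -- the prox inequality, summed
  have hsum3 : B + 2 * γ * A + 2 * β * γ * P ≤ 2 * β * γ * W := by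
    have h1 : ∑ i, ((p i - u i) ^ 2 + 2 * (β * γ) * |p i|)
        ≤ ∑ i, ((w i - u i) ^ 2 + 2 * (β * γ) * |w i|) :=
      Finset.sum_le_sum fun i _ => hcoord i
    have e1 : ∑ i, ((p i - u i) ^ 2 + 2 * (β * γ) * |p i|)
        = B + 2 * γ * A + γ ^ 2 * ∑ i, g i * g i + 2 * β * γ * P := by
      rw [hB, hA, hP, Finset.mul_sum, Finset.mul_sum, Finset.mul_sum,
        ← Finset.sum_add_distrib, ← Finset.sum_add_distrib, ← Finset.sum_add_distrib]
      refine Finset.sum_congr rfl fun i _ => ?_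
      rw [hui i]; ring
    have e2 : ∑ i, ((w i - u i) ^ 2 + 2 * (β * γ) * |w i|)
        = γ ^ 2 * ∑ i, g i * g i + 2 * β * γ * W := by
      rw [hW, Finset.mul_sum, Finset.mul_sum, ← Finset.sum_add_distrib]
      refine Finset.sum_congr rfl fun i _ => ?_
      rw [hui i]; ring
    rw [e1, e2] at h1
    linarith
  -- descent lemma
  have hdesc : f p ≤ f w + A + L / 2 * B := by
    have h := ista_descent_lemma f hdiff L hL.le hlip w p
    have hinner : ⟪gradient f w, p - w⟫ = A := by
      rw [hA]
      simp only [PiLp.inner_apply, RCLike.inner_apply, conj_trivial, PiLp.sub_apply, ← hg]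
      exact Finset.sum_congr rfl fun i _ => mul_comm _ _
    have hnorm : ‖p - w‖ ^ 2 = B := by
      rw [← real_inner_self_eq_norm_sq, hB]
      simp only [PiLp.inner_apply, RCLike.inner_apply, conj_trivial, PiLp.sub_apply]
    rw [hinner, hnorm] at h
    exact h
  -- step size bound : L/2 * B ≤ 1/(2γ) * B
  have hLγ : L * γ ≤ 1 := by
    have := mul_le_mul_of_nonneg_left hγL hL.le
    rwa [mul_one_div, div_self hL.ne'] at this
  have hstep : L / 2 * B ≤ 1 / (2 * γ) * B := by
    apply mul_le_mul_of_nonneg_right _ hBnn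
    rw [div_le_div_iff₀ (by norm_num) (by linarith)]
    nlinarith
  -- combine
  have key : A + 1 / (2 * γ) * B + β * P ≤ β * W := by
    have h2γ : (0:ℝ) < 2 * γ := by linarith
    have h1 : (A + 1 / (2 * γ) * B + β * P) * (2 * γ) ≤ (β * W) * (2 * γ) := by
      have e : (A + 1 / (2 * γ) * B + β * P) * (2 * γ)
          = 2 * γ * A + B + 2 * β * γ * P := by
        field_simp
      rw [e]
      nlinarith [hsum3]
    exact le_of_mul_le_mul_right h1 h2γ
  have : f p + β * P ≤ f w + β * W := by linarith
  simpa [hp, hu, hg, hP, hW] using this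
end

section
/- Let n be a natural number, f : ℝⁿ → ℝ convex and differentiable with L-Lipschitz gradient (L > 0), β ≥ 0, and set F(w) = f(w) + β·∑ᵢ|wᵢ|. Suppose w⋆ is a global minimizer of F. Define the ISTA sequence by w_{k+1} = S_{β/L}(w_k − (1/L)∇f(w_k)) from an arbitrary starting point w₀ ∈ ℝⁿ, with soft-thresholding applied coordinatewise. Then for every k ≥ 1, F(w_k) − F(w⋆) ≤ L·‖w₀ − w⋆‖₂²/(2k); in particular F(w_k) converges to the minimum value of F. -/
open Filter

section Aux

variable {n : ℕ}

-- scalar soft-threshold subgradient facts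
lemma soft_scalar (b : ℝ) (hb : 0 ≤ b) (u z : ℝ) :
    (u - Real.sign u * max (|u| - b) 0) * (z - Real.sign u * max (|u| - b) 0)
      ≤ b * (|z| - |Real.sign u * max (|u| - b) 0|) := by
  set p := Real.sign u * max (|u| - b) 0 with hp
  have key : |u - p| ≤ b ∧ (u - p) * p = b * |p| := by
    rcases lt_trichotomy u 0 with hu | hu | hu
    · rw [hp, Real.sign_of_neg hu, abs_of_neg hu]
      rcases le_or_gt (-u) b with h | h
      · rw [max_eq_right (by linarith)]
        constructor
        · simp [abs_of_nonpos hu.le]; linarith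
        · simp
      · rw [max_eq_left (by linarith)]
        constructor
        · rw [show u - -1 * (-u - b) = -b by ring, abs_neg, abs_of_nonneg hb]
        · rw [show (-1 : ℝ) * (-u - b) = u + b by ring,
            abs_of_neg (by linarith : u + b < 0)]
          ring
    · subst hu
      refine ⟨?_, ?_⟩ <;> simp [hp, hb]
    · rw [hp, Real.sign_of_pos hu, abs_of_pos hu]
      rcases le_or_gt u b with h | h
      · rw [max_eq_right (by linarith)]
        constructor
        · simp [abs_of_pos hu]; linarith
        · simp
      · rw [max_eq_left (by linarith)]
        constructor
        · rw [show u - 1 * (u - b) = b by ring, abs_of_nonneg hb]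
        · rw [show (1 : ℝ) * (u - b) = u - b by ring,
            abs_of_pos (by linarith : (0:ℝ) < u - b)]
          ring
  obtain ⟨h1, h2⟩ := key
  have h3 : (u - p) * z ≤ b * |z| := by
    calc (u - p) * z ≤ |(u - p) * z| := le_abs_self _
    _ = |u - p| * |z| := abs_mul _ _
    _ ≤ b * |z| := mul_le_mul_of_nonneg_right h1 (abs_nonneg _)
  nlinarith [h3, h2]

-- derivative of f along a line
lemma line_hasDerivAt_s10 (f : EuclideanSpace ℝ (Fin n) → ℝ) (hdiff : Differentiable ℝ f)
    (y v : EuclideanSpace ℝ (Fin n)) (t : ℝ) :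
    HasDerivAt (fun s : ℝ => f (y + s • v)) (inner ℝ (gradient f (y + t • v)) v : ℝ) t := by
  have hc : HasDerivAt (fun s : ℝ => y + s • v) v t := by
    simpa using ((hasDerivAt_id t).smul_const v).const_add y
  have hf : HasFDerivAt f (InnerProductSpace.toDual ℝ _ (gradient f (y + t • v)))
      (y + t • v) := (hdiff _).hasGradientAt
  exact (hf.comp_hasDerivAt t hc).congr_deriv (by simp)

-- first-order condition for convexity
lemma convex_first_order (f : EuclideanSpace ℝ (Fin n) → ℝ)
    (hconv : ConvexOn ℝ Set.univ f) (hdiff : Differentiable ℝ f)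
    (y z : EuclideanSpace ℝ (Fin n)) :
    f y + inner ℝ (gradient f y) (z - y) ≤ f z := by
  set v := z - y with hv
  have hd := line_hasDerivAt_s10 f hdiff y v 0
  simp only [zero_smul, add_zero] at hd
  have hslope : Filter.Tendsto (slope (fun s : ℝ => f (y + s • v)) 0) (nhdsWithin 0 {(0:ℝ)}ᶜ)
      (nhds (inner ℝ (gradient f y) v : ℝ)) := hasDerivAt_iff_tendsto_slope.mp hd
  have hmono : Filter.Tendsto (slope (fun s : ℝ => f (y + s • v)) 0) (nhdsWithin 0 (Set.Ioi 0))
      (nhds (inner ℝ (gradient f y) v : ℝ)) :=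
    hslope.mono_left (nhdsWithin_mono 0 (fun t ht => ne_of_gt ht))
  have hle : (inner ℝ (gradient f y) v : ℝ) ≤ f z - f y := by
    refine le_of_tendsto hmono ?_
    filter_upwards [Ioo_mem_nhdsGT_of_mem (Set.left_mem_Ico.2 one_pos)] with t ht
    have ht0 : 0 < t := ht.1
    have ht1 : t ≤ 1 := ht.2.le
    have hcx := hconv.2 (Set.mem_univ y) (Set.mem_univ z) (by linarith : (0:ℝ) ≤ 1 - t)
      ht0.le (by ring)
    have hyz : (1 - t) • y + t • z = y + t • v := by
      rw [hv]; module
    rw [hyz] at hcx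
    rw [slope_def_field]
    simp only [zero_smul, add_zero, sub_zero]
    rw [div_le_iff₀ ht0]
    simp only [smul_eq_mul] at hcx
    nlinarith [hcx]
  linarith

-- descent lemma
lemma descent_lemma (f : EuclideanSpace ℝ (Fin n) → ℝ) (hdiff : Differentiable ℝ f)
    (L : ℝ) (hL : 0 < L)
    (hlip : ∀ w₁ w₂ : EuclideanSpace ℝ (Fin n),
        ‖gradient f w₂ - gradient f w₁‖ ≤ L * ‖w₂ - w₁‖)
    (y x : EuclideanSpace ℝ (Fin n)) :
    f x ≤ f y + inner ℝ (gradient f y) (x - y) + L / 2 * ‖x - y‖ ^ 2 := by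
  set v := x - y with hv
  have hder : ∀ t : ℝ, HasDerivAt (fun s : ℝ => f (y + s • v))
      (inner ℝ (gradient f (y + t • v)) v : ℝ) t := line_hasDerivAt_s10 f hdiff y v
  have hgradcont : Continuous fun t : ℝ => gradient f (y + t • v) := by
    have hlg : LipschitzWith (Real.toNNReal L) (gradient f) := by
      apply LipschitzWith.of_dist_le_mul
      intro a b
      rw [dist_eq_norm, dist_eq_norm, Real.coe_toNNReal _ hL.le]
      exact hlip b a
    exact hlg.continuous.comp (by continuity)
  have hcont : Continuous fun t : ℝ => (inner ℝ (gradient f (y + t • v)) v : ℝ) :=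
    hgradcont.inner continuous_const
  have hFTC : f (y + (1:ℝ) • v) - f (y + (0:ℝ) • v)
      = ∫ t in (0:ℝ)..1, (inner ℝ (gradient f (y + t • v)) v : ℝ) :=
    (intervalIntegral.integral_eq_sub_of_hasDerivAt (fun t _ => hder t)
      (hcont.intervalIntegrable 0 1)).symm
  have hbound : ∀ t ∈ Set.Icc (0:ℝ) 1,
      (inner ℝ (gradient f (y + t • v)) v : ℝ)
        ≤ inner ℝ (gradient f y) v + L * ‖v‖ ^ 2 * t := by
    intro t ht
    have h1 : (inner ℝ (gradient f (y + t • v)) v : ℝ) - inner ℝ (gradient f y) v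
        = inner ℝ (gradient f (y + t • v) - gradient f y) v := (inner_sub_left _ _ _).symm
    have h2 : (inner ℝ (gradient f (y + t • v) - gradient f y) v : ℝ)
        ≤ ‖gradient f (y + t • v) - gradient f y‖ * ‖v‖ := real_inner_le_norm _ _
    have h3 : ‖gradient f (y + t • v) - gradient f y‖ ≤ L * ‖(y + t • v) - y‖ := hlip y _
    have h4 : ‖(y + t • v) - y‖ = t * ‖v‖ := by
      rw [add_sub_cancel_left, norm_smul, Real.norm_eq_abs, abs_of_nonneg ht.1]
    rw [h4] at h3
    have h5 := mul_le_mul_of_nonneg_right h3 (norm_nonneg v)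
    nlinarith [h1, h2, h5]
  have hint : (∫ t in (0:ℝ)..1, (inner ℝ (gradient f (y + t • v)) v : ℝ))
      ≤ ∫ t in (0:ℝ)..1, ((inner ℝ (gradient f y) v : ℝ) + L * ‖v‖ ^ 2 * t) := by
    apply intervalIntegral.integral_mono_on zero_le_one
      (hcont.intervalIntegrable 0 1) ?_ hbound
    exact (continuous_const.add (continuous_const.mul continuous_id)).intervalIntegrable 0 1
  have hval : (∫ t in (0:ℝ)..1, ((inner ℝ (gradient f y) v : ℝ) + L * ‖v‖ ^ 2 * t))
      = inner ℝ (gradient f y) v + L / 2 * ‖v‖ ^ 2 := by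
    rw [intervalIntegral.integral_add (intervalIntegrable_const)
      ((by continuity : Continuous fun t : ℝ => L * ‖v‖ ^ 2 * t).intervalIntegrable 0 1),
      intervalIntegral.integral_const_mul]
    simp [integral_id]
    ring
  have hx : y + (1:ℝ) • v = x := by rw [hv]; module
  have hy0 : y + (0:ℝ) • v = y := by module
  rw [hx, hy0] at hFTC
  linarith [hFTC, hint.trans_eq hval]

-- key prox-gradient inequality
lemma ista_key (n : ℕ) (f : EuclideanSpace ℝ (Fin n) → ℝ)
    (hconv : ConvexOn ℝ Set.univ f) (hdiff : Differentiable ℝ f)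
    (L : ℝ) (hL : 0 < L)
    (hlip : ∀ w₁ w₂ : EuclideanSpace ℝ (Fin n),
        ‖gradient f w₂ - gradient f w₁‖ ≤ L * ‖w₂ - w₁‖)
    (β : ℝ) (hβ : 0 ≤ β)
    (S : EuclideanSpace ℝ (Fin n) → EuclideanSpace ℝ (Fin n))
    (hS : ∀ (u : EuclideanSpace ℝ (Fin n)) (i : Fin n),
        S u i = Real.sign (u i) * max (|u i| - β / L) 0)
    (y z : EuclideanSpace ℝ (Fin n)) :
    f (S (y - (1/L) • gradient f y)) + β * ∑ i, |S (y - (1/L) • gradient f y) i|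
      ≤ (f z + β * ∑ i, |z i|)
        + L / 2 * (‖y - z‖ ^ 2 - ‖S (y - (1/L) • gradient f y) - z‖ ^ 2) := by
  set g : EuclideanSpace ℝ (Fin n) := gradient f y with hg
  set u : EuclideanSpace ℝ (Fin n) := y - (1/L) • g with hu
  set p : EuclideanSpace ℝ (Fin n) := S u with hpdef
  have hsub : L * (inner ℝ (u - p) (z - p) : ℝ)
      ≤ β * ((∑ i, |z i|) - ∑ i, |p i|) := by
    have hbL : 0 ≤ β / L := div_nonneg hβ hL.le
    have hcoord : ∀ i : Fin n, (u i - p i) * (z i - p i) ≤ β / L * (|z i| - |p i|) := by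
      intro i
      have h := soft_scalar (β / L) hbL (u i) (z i)
      rw [hpdef, hS u i]
      exact h
    have hinner : (inner ℝ (u - p) (z - p) : ℝ) = ∑ i, (u i - p i) * (z i - p i) := by
      rw [PiLp.inner_apply]
      refine Finset.sum_congr rfl fun i _ => ?_
      simp [RCLike.inner_apply]; ring
    rw [hinner, Finset.mul_sum]
    have : ∑ i, L * ((u i - p i) * (z i - p i)) ≤ ∑ i : Fin n, L * (β / L * (|z i| - |p i|)) :=
      Finset.sum_le_sum fun i _ => mul_le_mul_of_nonneg_left (hcoord i) hL.le
    refine this.trans_eq ?_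
    rw [← Finset.sum_sub_distrib, Finset.mul_sum]
    refine Finset.sum_congr rfl fun i _ => ?_
    field_simp
  have hdesc := descent_lemma f hdiff L hL hlip y p
  have hcvx := convex_first_order f hconv hdiff y z
  rw [← hg] at hdesc hcvx
  have hLinner : L * (inner ℝ (u - p) (z - p) : ℝ)
      = L * (inner ℝ (y - p) (z - p) : ℝ) - inner ℝ g (z - p) := by
    have e : u - p = (y - p) - (1/L) • g := by rw [hu]; abel
    rw [e, inner_sub_left, real_inner_smul_left]
    field_simp
  have hginner : (inner ℝ g (p - y) : ℝ) - inner ℝ g (z - y) + inner ℝ g (z - p) = 0 := by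
    simp only [inner_sub_right]
    ring
  have hnorm : L / 2 * (‖y - z‖ ^ 2 - ‖p - z‖ ^ 2)
      = L / 2 * ‖p - y‖ ^ 2 - L * (inner ℝ (y - p) (z - p) : ℝ) := by
    have h := norm_sub_sq_real (y - p) (z - p)
    have e : (y - p) - (z - p) = y - z := by abel
    rw [e] at h
    rw [show ‖p - z‖ = ‖z - p‖ from norm_sub_rev _ _,
      show ‖p - y‖ = ‖y - p‖ from norm_sub_rev _ _]
    nlinarith [h]
  linarith [hdesc, hcvx, hsub, hLinner, hginner, hnorm]

end Aux

/-- ISTA convergence rate: for `f` convex, differentiable with `L`-Lipschitz gradient,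
`F = f + β‖·‖₁` with global minimizer `w⋆`, the ISTA iterates with step `1/L` satisfy
`F(w_k) − F(w⋆) ≤ L‖w₀ − w⋆‖²/(2k)` for all `k ≥ 1`; in particular `F(w_k) → F(w⋆)`. -/
theorem ista_convergence_rate
    (n : ℕ) (f : EuclideanSpace ℝ (Fin n) → ℝ)
    (hconv : ConvexOn ℝ Set.univ f) (hdiff : Differentiable ℝ f)
    (L : ℝ) (hL : 0 < L)
    (hlip : ∀ w₁ w₂ : EuclideanSpace ℝ (Fin n),
        ‖gradient f w₂ - gradient f w₁‖ ≤ L * ‖w₂ - w₁‖)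
    (β : ℝ) (hβ : 0 ≤ β)
    (S : EuclideanSpace ℝ (Fin n) → EuclideanSpace ℝ (Fin n))
    (hS : ∀ (u : EuclideanSpace ℝ (Fin n)) (i : Fin n),
        S u i = Real.sign (u i) * max (|u i| - β / L) 0)
    (wstar : EuclideanSpace ℝ (Fin n))
    (hmin : ∀ w : EuclideanSpace ℝ (Fin n),
        f wstar + β * ∑ i, |wstar i| ≤ f w + β * ∑ i, |w i|)
    (w : ℕ → EuclideanSpace ℝ (Fin n))
    (hrec : ∀ k : ℕ, w (k + 1) = S (w k - (1 / L) • gradient f (w k))) :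
    (∀ k : ℕ, 1 ≤ k →
        (f (w k) + β * ∑ i, |w k i|) - (f wstar + β * ∑ i, |wstar i|)
          ≤ L * ‖w 0 - wstar‖ ^ 2 / (2 * k)) ∧
    Tendsto (fun k : ℕ => f (w k) + β * ∑ i, |w k i|) atTop
      (nhds (f wstar + β * ∑ i, |wstar i|)) := by
  obtain ⟨Fv, hFv⟩ : ∃ Fv : EuclideanSpace ℝ (Fin n) → ℝ,
      Fv = fun v => f v + β * ∑ i, |v i| := ⟨_, rfl⟩
  have hkey : ∀ (k : ℕ) (z : EuclideanSpace ℝ (Fin n)),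
      Fv (w (k+1)) ≤ Fv z + L / 2 * (‖w k - z‖ ^ 2 - ‖w (k+1) - z‖ ^ 2) := by
    intro k z
    rw [hrec k]
    simp only [hFv]
    exact ista_key n f hconv hdiff L hL hlip β hβ S hS (w k) z
  have hdec : ∀ k : ℕ, Fv (w (k+1)) ≤ Fv (w k) := by
    intro k
    have h := hkey k (w k)
    simp only [sub_self, norm_zero] at h
    norm_num at h
    have hnn : 0 ≤ L / 2 * ‖w (k+1) - w k‖ ^ 2 :=
      mul_nonneg (by linarith) (sq_nonneg _)
    linarith [h, hnn]
  have hmono : ∀ i j : ℕ, i ≤ j → Fv (w j) ≤ Fv (w i) := by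
    intro i j hij
    induction j, hij using Nat.le_induction with
    | base => exact le_refl _
    | succ m hm ih => exact (hdec m).trans ih
  have hmin' : ∀ v, Fv wstar ≤ Fv v := by
    intro v; simp only [hFv]; exact hmin v
  have h0 : ∀ k : ℕ, 0 ≤ Fv (w k) - Fv wstar := fun k => sub_nonneg.2 (hmin' (w k))
  have htel : ∀ k : ℕ, ∑ j ∈ Finset.range k, (Fv (w (j+1)) - Fv wstar)
      ≤ L / 2 * (‖w 0 - wstar‖ ^ 2 - ‖w k - wstar‖ ^ 2) := by
    intro k
    induction k with
    | zero => simp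
    | succ m ih =>
      rw [Finset.sum_range_succ]
      have h := hkey m wstar
      have hstep : Fv (w (m+1)) - Fv wstar
          ≤ L / 2 * (‖w m - wstar‖ ^ 2 - ‖w (m+1) - wstar‖ ^ 2) := by
        linarith [h]
      linarith [ih, hstep]
  have hkbound : ∀ k : ℕ, (k : ℝ) * (Fv (w k) - Fv wstar) ≤ L / 2 * ‖w 0 - wstar‖ ^ 2 := by
    intro k
    have h1 : (k : ℝ) * (Fv (w k) - Fv wstar)
        ≤ ∑ j ∈ Finset.range k, (Fv (w (j+1)) - Fv wstar) := by
      have hterm : ∀ j ∈ Finset.range k, (Fv (w k) - Fv wstar) ≤ (Fv (w (j+1)) - Fv wstar) := by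
        intro j hj
        have := hmono (j+1) k (Finset.mem_range.mp hj)
        linarith
      calc (k : ℝ) * (Fv (w k) - Fv wstar)
          = ∑ _j ∈ Finset.range k, (Fv (w k) - Fv wstar) := by
            rw [Finset.sum_const, Finset.card_range, nsmul_eq_mul]
        _ ≤ _ := Finset.sum_le_sum hterm
    have h2 := htel k
    nlinarith [h1, h2, mul_nonneg hL.le (sq_nonneg ‖w k - wstar‖)]
  have hrate : ∀ k : ℕ, 1 ≤ k → Fv (w k) - Fv wstar ≤ L * ‖w 0 - wstar‖ ^ 2 / (2 * k) := by
    intro k hk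
    have hkpos : (0 : ℝ) < k := by exact_mod_cast hk
    rw [le_div_iff₀ (by linarith : (0:ℝ) < 2 * k)]
    nlinarith [hkbound k]
  constructor
  · intro k hk
    have := hrate k hk
    simp only [hFv] at this
    exact this
  · have hC : Tendsto (fun k : ℕ => L * ‖w 0 - wstar‖ ^ 2 / (2 * (k : ℝ))) atTop (nhds 0) := by
      have h := tendsto_const_div_atTop_nhds_zero_nat (L * ‖w 0 - wstar‖ ^ 2 / 2)
      refine h.congr fun k => ?_
      rw [div_div]
    have hzero : Tendsto (fun k : ℕ => Fv (w k) - Fv wstar) atTop (nhds 0) := by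
      refine squeeze_zero' (Filter.Eventually.of_forall h0) ?_ hC
      filter_upwards [Filter.eventually_ge_atTop 1] with k hk
      exact hrate k hk
    have hfin := hzero.const_add (Fv wstar)
    simp only [add_zero] at hfin
    have hfin2 : Tendsto (fun k : ℕ => Fv (w k)) atTop (nhds (Fv wstar)) :=
      hfin.congr fun k => by ring
    simp only [hFv] at hfin2
    exact hfin2
end
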